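/- Let (X,d) be a pseudometric space, ε ∈ (0,1] a real number, and rt, x, y, y' ∈ X. Let ℓ : X × X → ℝ be another pseudometric on X with d(a,b) ≤ ℓ(a,b) for all a,b ∈ X, and let D : X → ℝ satisfy d(rt,z) ≤ D(z) ≤ (1+ε)·d(rt,z) for each z ∈ {x, y, y'}. Assume ℓ(x,y) ≤ ε·D(x) and ℓ(y,y') ≤ ε·D(y). Then (a) ℓ(x,y') ≤ 8ε·d(rt,x), and (b) D(y') + ℓ(x,y') ≤ (1+25ε)·d(rt,x). -/
import Mathlib


/-- the abstract metric form of the SLT stretch lemma. Here `dist` is the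
shortest-path metric of the graph, `ℓ` is the (dominating) Euler-tour pseudometric,
and `D` is a `(1+ε)`-approximation of the distance from the root `rt`. -/
theorem slt_stretch_lemma {X : Type*} [PseudoMetricSpace X]
    (ε : ℝ) (hε0 : 0 < ε) (hε1 : ε ≤ 1)
    (rt x y y' : X) (ℓ : X → X → ℝ)
    (hℓ_self : ∀ a, ℓ a a = 0)
    (hℓ_symm : ∀ a b, ℓ a b = ℓ b a)
    (hℓ_tri : ∀ a b c, ℓ a c ≤ ℓ a b + ℓ b c)
    (hdℓ : ∀ a b, dist a b ≤ ℓ a b)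
    (D : X → ℝ)
    (hDx : dist rt x ≤ D x ∧ D x ≤ (1 + ε) * dist rt x)
    (hDy : dist rt y ≤ D y ∧ D y ≤ (1 + ε) * dist rt y)
    (hDy' : dist rt y' ≤ D y' ∧ D y' ≤ (1 + ε) * dist rt y')
    (hxy : ℓ x y ≤ ε * D x) (hyy' : ℓ y y' ≤ ε * D y) :
    ℓ x y' ≤ 8 * ε * dist rt x ∧
    D y' + ℓ x y' ≤ (1 + 25 * ε) * dist rt x := by
  obtain ⟨hx1, hx2⟩ := hDx
  obtain ⟨hy1, hy2⟩ := hDy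
  obtain ⟨hy'1, hy'2⟩ := hDy'
  have hR : 0 ≤ dist rt x := dist_nonneg
  have h1 : dist rt y ≤ dist rt x + ℓ x y :=
    (dist_triangle rt x y).trans (by linarith [hdℓ x y])
  have h2 : ℓ x y' ≤ ℓ x y + ℓ y y' := hℓ_tri x y y'
  have h3 : dist rt y' ≤ dist rt x + ℓ x y' :=
    (dist_triangle rt x y').trans (by linarith [hdℓ x y'])
  have hxyR : ℓ x y ≤ 2 * ε * dist rt x := by nlinarith
  have hyR : D y ≤ 3 * (1 + ε) * dist rt x := by nlinarith
  have ha : ℓ x y' ≤ 8 * ε * dist rt x := by nlinarith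
  refine ⟨ha, ?_⟩
  nlinarith [mul_nonneg hε0.le hR]
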